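/- Let T = 2^ℓ, let r, r' be integers with 0 ≤ r ≤ r' < T, and let t be a slot with r' ≤ t < T. Let S be the unique segment of Seg(r) containing slot t and S' the unique segment of Seg(r') containing slot t, of classes s and s' respectively (i.e., of lengths 2^s and 2^{s'}). Then s ≥ s'; consequently S' ⊆ S. -/

import Mathlib

/-- The procedure `FormSegments`, starting at stage `s` with current time `t`, stopping
once `t ≥ T`.  Each produced entry `(s, a, b)` records the stage `s` at which the
interval `[a, b]` was appended. -/
def segAux (T : ℕ) (s t : ℕ) : List (ℕ × ℕ × ℕ) :=
  if h : t < T then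
    if 2 ^ (s + 1) ∣ t then
      (s, t, t + 2 ^ s) :: (s, t + 2 ^ s, t + 2 ^ (s + 1)) ::
        segAux T (s + 1) (t + 2 ^ (s + 1))
    else
      (s, t, t + 2 ^ s) :: segAux T (s + 1) (t + 2 ^ s)
  else []
termination_by T - t
decreasing_by
  · have h1 : 0 < 2 ^ (s + 1) := Nat.pow_pos (by norm_num)
    omega
  · have h1 : 0 < 2 ^ s := Nat.pow_pos (by norm_num)
    omega

/-- `Seg T r` : the sequence of intervals of `Seg(r)` (forgetting the stages). -/
def Seg (T rj : ℕ) : List (ℕ × ℕ) := (segAux T 0 rj).map fun x => (x.2.1, x.2.2)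

/-- the next multiple of `2^(s0+1)` strictly greater than `t0` (when `2^s0 ∣ t0`). -/
def nxt (s0 t0 : ℕ) : ℕ := if 2 ^ (s0 + 1) ∣ t0 then t0 + 2 ^ (s0 + 1) else t0 + 2 ^ s0

lemma step_lem (d x y : ℕ) (hx : d ∣ x) (hy : d ∣ y) (hxy : x < y) : x + d ≤ y := by
  have h1 : d ∣ y - x := Nat.dvd_sub hy hx
  have h2 := Nat.le_of_dvd (by omega) h1
  omega

lemma dvd_nxt (s0 t0 : ℕ) (h : 2 ^ s0 ∣ t0) : 2 ^ (s0 + 1) ∣ nxt s0 t0 := by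
  unfold nxt
  split_ifs with hd
  · exact Dvd.dvd.add hd dvd_rfl
  · obtain ⟨k, rfl⟩ := h
    have hk : ¬ 2 ∣ k := by
      intro h2k
      obtain ⟨m, hm⟩ := h2k
      exact hd ⟨m, by rw [hm]; ring⟩
    obtain ⟨m, hm⟩ : 2 ∣ (k + 1) := by omega
    refine ⟨m, ?_⟩
    have h1 : 2 ^ s0 * k + 2 ^ s0 = 2 ^ s0 * (k + 1) := by ring
    rw [h1, hm, pow_succ]; ring

lemma lt_nxt (s0 t0 : ℕ) : t0 < nxt s0 t0 := by
  have h1 : 0 < 2 ^ s0 := Nat.pow_pos (by norm_num)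
  have h2 : 0 < 2 ^ (s0 + 1) := Nat.pow_pos (by norm_num)
  unfold nxt; split_ifs <;> omega

lemma nxt_mono (s0 t0 t0' : ℕ) (h0 : 2 ^ s0 ∣ t0) (h0' : 2 ^ s0 ∣ t0') (h : t0 ≤ t0') :
    nxt s0 t0 ≤ nxt s0 t0' := by
  have hp : (2:ℕ) ^ (s0 + 1) = 2 ^ s0 * 2 := pow_succ 2 s0
  unfold nxt
  split_ifs with h1 h2 h2
  · omega
  · -- 2^(s0+1) ∣ t0, ¬ ∣ t0'; then t0 < t0' so t0 + 2^s0 ≤ t0'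
    have hne : t0 ≠ t0' := by rintro rfl; exact h2 h1
    have := step_lem (2 ^ s0) t0 t0' h0 h0' (by omega)
    omega
  · omega
  · omega

/-- basic structure of entries. -/
lemma segAux_mem (T s0 t0 : ℕ) (hdvd : 2 ^ s0 ∣ t0) (s a b : ℕ)
    (h : (s, a, b) ∈ segAux T s0 t0) : s0 ≤ s ∧ 2 ^ s ∣ a ∧ b = a + 2 ^ s ∧ t0 ≤ a := by
  rw [segAux] at h
  split_ifs at h with hT hd
  · simp only [List.mem_cons, Prod.mk.injEq] at h
    rcases h with ⟨rfl, rfl, rfl⟩ | ⟨rfl, rfl, rfl⟩ | h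
    · exact ⟨le_rfl, hdvd, rfl, le_rfl⟩
    · refine ⟨le_rfl, ?_, by ring, by omega⟩
      exact Dvd.dvd.add (dvd_trans (pow_dvd_pow 2 (Nat.le_succ _)) hd) dvd_rfl
    · have hd2 : 2 ^ (s0 + 1) ∣ t0 + 2 ^ (s0 + 1) := Dvd.dvd.add hd dvd_rfl
      have := segAux_mem T (s0 + 1) (t0 + 2 ^ (s0 + 1)) hd2 s a b h
      have hp : 0 < 2 ^ (s0 + 1) := Nat.pow_pos (by norm_num)
      exact ⟨by omega, this.2.1, this.2.2.1, by omega⟩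
  · simp only [List.mem_cons, Prod.mk.injEq] at h
    rcases h with ⟨rfl, rfl, rfl⟩ | h
    · exact ⟨le_rfl, hdvd, rfl, le_rfl⟩
    · have hd2 : 2 ^ (s0 + 1) ∣ t0 + 2 ^ s0 := by
        have := dvd_nxt s0 t0 hdvd
        unfold nxt at this
        rwa [if_neg hd] at this
      have := segAux_mem T (s0 + 1) (t0 + 2 ^ s0) hd2 s a b h
      have hp : 0 < 2 ^ s0 := Nat.pow_pos (by norm_num)
      exact ⟨by omega, this.2.1, this.2.2.1, by omega⟩
  · exact absurd h List.not_mem_nil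
termination_by T - t0
decreasing_by
  · have h1 : 0 < 2 ^ (s0 + 1) := Nat.pow_pos (by norm_num)
    omega
  · have h1 : 0 < 2 ^ s0 := Nat.pow_pos (by norm_num)
    omega

/-- head/tail decomposition. -/
lemma segAux_cases (T s0 t0 s a b : ℕ) (h : (s, a, b) ∈ segAux T s0 t0) :
    (s = s0 ∧ t0 ≤ a ∧ b ≤ nxt s0 t0 ∧ b = a + 2 ^ s0) ∨
      (s, a, b) ∈ segAux T (s0 + 1) (nxt s0 t0) := by
  rw [segAux] at h
  split_ifs at h with hT hd
  · simp only [List.mem_cons, Prod.mk.injEq] at h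
    rw [nxt, if_pos hd]
    have hp : (2:ℕ) ^ (s0 + 1) = 2 ^ s0 * 2 := pow_succ 2 s0
    rcases h with ⟨rfl, rfl, rfl⟩ | ⟨rfl, rfl, rfl⟩ | h
    · left; refine ⟨rfl, le_rfl, by omega, rfl⟩
    · left; refine ⟨rfl, by omega, le_rfl, by ring⟩
    · right; exact h
  · simp only [List.mem_cons, Prod.mk.injEq] at h
    rw [nxt, if_neg hd]
    rcases h with ⟨rfl, rfl, rfl⟩ | h
    · left; exact ⟨rfl, le_rfl, le_rfl, rfl⟩
    · right; exact h
  · exact absurd h List.not_mem_nil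

/-- dyadic nesting. -/
lemma nest (s s' a a' t : ℕ) (hss : s' ≤ s) (hda : 2 ^ s ∣ a) (hda' : 2 ^ s' ∣ a')
    (h1 : a ≤ t) (h2 : t < a + 2 ^ s) (h3 : a' ≤ t) (h4 : t < a' + 2 ^ s') :
    a ≤ a' ∧ a' + 2 ^ s' ≤ a + 2 ^ s := by
  have hpd : (2:ℕ) ^ s' ∣ 2 ^ s := pow_dvd_pow 2 hss
  have hda2 : 2 ^ s' ∣ a := dvd_trans hpd hda
  constructor
  · by_contra hc
    have := step_lem (2 ^ s') a' a hda' hda2 (by omega)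
    omega
  · have hb : 2 ^ s' ∣ a + 2 ^ s := Dvd.dvd.add hda2 hpd
    have := step_lem (2 ^ s') a' (a + 2 ^ s) hda' hb (by omega)
    omega

/-- key comparison lemma. -/
lemma key (T s0 t0 t0' t : ℕ) (h0 : 2 ^ s0 ∣ t0) (h0' : 2 ^ s0 ∣ t0') (h01 : t0 ≤ t0')
    (s a b : ℕ) (hS : (s, a, b) ∈ segAux T s0 t0) (ha : a ≤ t) (hb : t < b)
    (s' a' b' : ℕ) (hS' : (s', a', b') ∈ segAux T s0 t0') (ha' : a' ≤ t) (hb' : t < b') :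
    s' ≤ s ∧ a ≤ a' ∧ b' ≤ b := by
  have hT' : t0' < T := by
    by_contra hc
    rw [segAux, dif_neg hc] at hS'
    exact absurd hS' List.not_mem_nil
  have hm1 := segAux_mem T s0 t0 h0 s a b hS
  have hm1' := segAux_mem T s0 t0' h0' s' a' b' hS'
  by_cases hcase : t < nxt s0 t0'
  · -- entry2 is a head entry, so s' = s0 ≤ s
    have hs' : s' = s0 := by
      rcases segAux_cases T s0 t0' s' a' b' hS' with ⟨h, _⟩ | htail
      · exact h
      · have := segAux_mem T (s0 + 1) (nxt s0 t0') (dvd_nxt s0 t0' h0') s' a' b' htail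
        omega
    have hss : s' ≤ s := by omega
    have := nest s s' a a' t hss hm1.2.1 hm1'.2.1 ha (by omega) ha' (by omega)
    exact ⟨hss, this.1, by omega⟩
  · -- both in tails
    have hmn : nxt s0 t0 ≤ nxt s0 t0' := nxt_mono s0 t0 t0' h0 h0' h01
    have htail : (s, a, b) ∈ segAux T (s0 + 1) (nxt s0 t0) := by
      rcases segAux_cases T s0 t0 s a b hS with ⟨_, _, hble, _⟩ | h
      · omega
      · exact h
    have htail' : (s', a', b') ∈ segAux T (s0 + 1) (nxt s0 t0') := by
      rcases segAux_cases T s0 t0' s' a' b' hS' with ⟨_, _, hble, _⟩ | h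
      · omega
      · exact h
    exact key T (s0 + 1) (nxt s0 t0) (nxt s0 t0') t (dvd_nxt s0 t0 h0)
      (dvd_nxt s0 t0' h0') hmn s a b htail ha hb s' a' b' htail' ha' hb'
termination_by T - t0'
decreasing_by
  have := lt_nxt s0 t0'
  omega

/-- if `0 ≤ r ≤ r' < T = 2^ℓ` and `r' ≤ t < T`, and `S = [a,b]` (of class
`s`) is the segment of `Seg(r)` containing slot `t` while `S' = [a',b']` (of class `s'`)
is the segment of `Seg(r')` containing slot `t`, then `s ≥ s'`, and consequently
`S' ⊆ S`. -/
theorem stmt5 (ℓ r r' t : ℕ) (hrr' : r ≤ r') (hr' : r' < 2 ^ ℓ) (hrt : r' ≤ t)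
    (ht : t < 2 ^ ℓ)
    (s a b s' a' b' : ℕ)
    (hS : (s, a, b) ∈ segAux (2 ^ ℓ) 0 r) (ha : a ≤ t) (hb : t + 1 ≤ b)
    (hS' : (s', a', b') ∈ segAux (2 ^ ℓ) 0 r') (ha' : a' ≤ t) (hb' : t + 1 ≤ b') :
    s' ≤ s ∧ a ≤ a' ∧ b' ≤ b :=
  key (2 ^ ℓ) 0 r r' t (by simp) (by simp) hrr' s a b hS ha (by omega)
    s' a' b' hS' ha' (by omega)
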